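/- The topological space c₀ \ ⋃_{j=1}^∞ E^j, with the subspace topology, is homeomorphic to c₀. -/

import Mathlib

open scoped ZeroAtInfty

/-- The union `⋃ₙ Eⁿ` of the sets `Eⁿ = {x ∈ c₀ : x_k = 0 ∀ k > n}`:
the eventually-zero sequences. -/
def evZero (K : Type*) [NontriviallyNormedField K] : Set C₀(ℕ, K) :=
  ⋃ n : ℕ, {x | ∀ k, n ≤ k → x k = 0}

open Filter Topology Metric Set

set_option linter.unusedSectionVars false
set_option linter.deprecated false
set_option maxHeartbeats 1000000


open Filter Topology Metric Set

theorem homeo_of_coding {X : Type*} [MetricSpace X]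
    (f : X → ℕ → ℕ) (hcont : Continuous f) (hsurj : Function.Surjective f)
    (hsep : ∀ x : X, ∀ ε : ℝ, 0 < ε → ∃ n, ∀ y, (∀ i ≤ n, f y i = f x i) → dist y x < ε) :
    Nonempty (X ≃ₜ (ℕ → ℕ)) := by
  have hinj : Function.Injective f := by
    intro x y hxy
    have h : ∀ ε : ℝ, 0 < ε → dist x y < ε := by
      intro ε hε
      obtain ⟨n, hn⟩ := hsep y ε hε
      exact hn x (fun i _ => by rw [hxy])
    have : dist x y = 0 := by
      by_contra hne
      exact lt_irrefl _ (h _ (lt_of_le_of_ne dist_nonneg (Ne.symm hne)))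
    exact eq_of_dist_eq_zero this
  have hind : IsInducing f := by
    rw [isInducing_iff_nhds]
    intro x
    refine le_antisymm ((tendsto_iff_comap).mp (hcont.continuousAt (x := x))) ?_
    intro s hs
    obtain ⟨ε, hε, hball⟩ := Metric.mem_nhds_iff.mp hs
    obtain ⟨n, hn⟩ := hsep x ε hε
    refine Filter.mem_comap.mpr ⟨{g : ℕ → ℕ | ∀ i ≤ n, g i = f x i}, ?_, ?_⟩
    · have : {g : ℕ → ℕ | ∀ i ≤ n, g i = f x i} =
          ⋂ i ∈ Finset.range (n+1), (fun g : ℕ → ℕ => g i) ⁻¹' {f x i} := by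
        ext g
        simp only [Set.mem_setOf_eq, Set.mem_iInter, Set.mem_preimage, Set.mem_singleton_iff,
          Finset.mem_range, Nat.lt_succ_iff]
      rw [this]
      refine IsOpen.mem_nhds ?_ ?_
      · exact isOpen_biInter_finset fun i _ => (continuous_apply i).isOpen_preimage _ (isOpen_discrete _)
      · exact Set.mem_iInter₂.mpr fun i _ => rfl
    · intro y hy
      exact hball (hn y hy)
  exact ⟨(Equiv.ofBijective f ⟨hinj, hsurj⟩).toHomeomorphOfIsInducing hind⟩




theorem homeo_of_scheme {X : Type*} [MetricSpace X] {A : Type*}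
    (R : Set A) (Ch : ℕ → A → A → Prop) (ν : ℕ → X → A)
    (hR : ∀ x, ν 0 x ∈ R)
    (hCh : ∀ n x, Ch n (ν n x) (ν (n+1) x))
    (hRc : Countable ↥R) (hRi : Infinite ↥R)
    (hCc : ∀ n a, Countable {b // Ch n a b}) (hCi : ∀ n a, Infinite {b // Ch n a b})
    (hloc : ∀ n x, ∃ ε : ℝ, 0 < ε ∧ ∀ y, dist y x < ε → ν n y = ν n x)
    (hdiam : ∀ (x : X) (ε : ℝ), 0 < ε → ∃ n, ∀ y, ν n y = ν n x → dist y x < ε)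
    (hreal : ∀ a : ℕ → A, a 0 ∈ R → (∀ n, Ch n (a n) (a (n+1))) → ∃ x, ∀ n, ν n x = a n) :
    Nonempty (X ≃ₜ (ℕ → ℕ)) := by
  classical
  obtain ⟨dR⟩ := nonempty_denumerable ↥R
  have hC : ∀ n a, Nonempty ({b // Ch n a b} ≃ ℕ) := fun n a => by
    haveI := hCc n a; haveI := hCi n a
    obtain ⟨d⟩ := nonempty_denumerable {b // Ch n a b}
    exact ⟨@Denumerable.eqv _ d⟩
  let e0 : ↥R ≃ ℕ := @Denumerable.eqv _ dR
  let eC : ∀ n a, {b // Ch n a b} ≃ ℕ := fun n a => (hC n a).some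
  let f : X → ℕ → ℕ := fun x n => match n with
    | 0 => e0 ⟨ν 0 x, hR x⟩
    | (m+1) => eC m (ν m x) ⟨ν (m+1) x, hCh m x⟩
  have econgr : ∀ (n : ℕ) (a a' b b' : A) (h : Ch n a b) (h' : Ch n a' b'), a = a' → b = b' →
      eC n a ⟨b, h⟩ = eC n a' ⟨b', h'⟩ := by
    intro n a a' b b' h h' ha hb
    subst ha; subst hb; rfl
  have hdet : ∀ (n : ℕ) (x y : X), (∀ i ≤ n, f y i = f x i) → ν n y = ν n x := by
    intro n
    induction n with
    | zero =>
      intro x y h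
      have h0 : f y 0 = f x 0 := h 0 le_rfl
      have h1 : (⟨ν 0 y, hR y⟩ : ↥R) = ⟨ν 0 x, hR x⟩ := e0.injective h0
      exact congrArg Subtype.val h1
    | succ m ih =>
      intro x y h
      have hm : ν m y = ν m x := ih x y (fun i hi => h i (hi.trans (Nat.le_succ m)))
      have h1 : f y (m+1) = f x (m+1) := h (m+1) le_rfl
      have h2 : eC m (ν m x) ⟨ν (m+1) y, hm ▸ hCh m y⟩ =
          eC m (ν m x) ⟨ν (m+1) x, hCh m x⟩ := by
        rw [← econgr m (ν m y) (ν m x) (ν (m+1) y) (ν (m+1) y) (hCh m y) (hm ▸ hCh m y) hm rfl]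
        exact h1
      have h3 := (eC m (ν m x)).injective h2
      exact congrArg Subtype.val h3
  have hsurj : Function.Surjective f := by
    intro β
    let a : ℕ → A := fun n => Nat.rec ((e0.symm (β 0)) : ↥R).1
      (fun m p => ((eC m p).symm (β (m+1))).1) n
    have ha0 : a 0 ∈ R := (e0.symm (β 0)).2
    have haCh : ∀ n, Ch n (a n) (a (n+1)) := fun n => ((eC n (a n)).symm (β (n+1))).2
    obtain ⟨x, hx⟩ := hreal a ha0 haCh
    refine ⟨x, funext fun n => ?_⟩
    match n with
    | 0 =>
      show e0 ⟨ν 0 x, hR x⟩ = β 0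
      have h1 : (⟨ν 0 x, hR x⟩ : ↥R) = e0.symm (β 0) := Subtype.ext (hx 0)
      rw [h1, Equiv.apply_symm_apply]
    | (m+1) =>
      show eC m (ν m x) ⟨ν (m+1) x, hCh m x⟩ = β (m+1)
      have h2 : eC m (ν m x) ⟨ν (m+1) x, hCh m x⟩ = eC m (a m) ⟨a (m+1), haCh m⟩ :=
        econgr m _ _ _ _ _ _ (hx m) (hx (m+1))
      rw [h2]
      have h3 : (⟨a (m+1), haCh m⟩ : {b // Ch m (a m) b}) = (eC m (a m)).symm (β (m+1)) :=
        Subtype.ext rfl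
      rw [h3, Equiv.apply_symm_apply]
  have hcont : Continuous f := by
    apply continuous_pi
    intro n
    rw [continuous_iff_continuousAt]
    intro x
    have key : ∃ ε : ℝ, 0 < ε ∧ ∀ y, dist y x < ε → f y n = f x n := by
      match n with
      | 0 =>
        obtain ⟨ε, hε, hloc0⟩ := hloc 0 x
        exact ⟨ε, hε, fun y hy => by
          show e0 ⟨ν 0 y, hR y⟩ = e0 ⟨ν 0 x, hR x⟩
          congr 1
          exact Subtype.ext (hloc0 y hy)⟩
      | (m+1) =>
        obtain ⟨ε1, hε1, hloc1⟩ := hloc m x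
        obtain ⟨ε2, hε2, hloc2⟩ := hloc (m+1) x
        refine ⟨min ε1 ε2, lt_min hε1 hε2, fun y hy => ?_⟩
        have hm : ν m y = ν m x := hloc1 y (hy.trans_le (min_le_left _ _))
        have hm1 : ν (m+1) y = ν (m+1) x := hloc2 y (hy.trans_le (min_le_right _ _))
        show eC m (ν m y) ⟨ν (m+1) y, hCh m y⟩ = eC m (ν m x) ⟨ν (m+1) x, hCh m x⟩
        exact econgr m _ _ _ _ _ _ hm hm1
    obtain ⟨ε, hε, hconst⟩ := key
    have : ∀ᶠ y in 𝓝 x, f y n = f x n := by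
      filter_upwards [Metric.ball_mem_nhds x hε] with y hy
      exact hconst y (mem_ball.mp hy)
    have h2 : Filter.Tendsto (fun _ : X => f x n) (𝓝 x) (𝓝 (f x n)) := tendsto_const_nhds
    exact h2.congr' (by filter_upwards [this] with y hy using hy.symm)
  have hsep : ∀ x : X, ∀ ε : ℝ, 0 < ε → ∃ n, ∀ y, (∀ i ≤ n, f y i = f x i) → dist y x < ε := by
    intro x ε hε
    obtain ⟨n, hn⟩ := hdiam x ε hε
    exact ⟨n, fun y hy => hn y (hdet n x y hy)⟩
  exact homeo_of_coding f hcont hsurj hsep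


namespace C0Aux

variable {K : Type*} [NontriviallyNormedField K] [IsUltrametricDist K]





lemma dist_le_iff (f g : C₀(ℕ, K)) {C : ℝ} (hC : 0 ≤ C) :
    dist f g ≤ C ↔ ∀ k, ‖f k - g k‖ ≤ C := by
  rw [← ZeroAtInftyContinuousMap.dist_toBCF_eq_dist, BoundedContinuousFunction.dist_le hC]
  simp only [dist_eq_norm]
  rfl

lemma apply_dist (f g : C₀(ℕ, K)) (k : ℕ) : ‖f k - g k‖ ≤ dist f g := by
  rw [← ZeroAtInftyContinuousMap.dist_toBCF_eq_dist]
  simpa [dist_eq_norm] using BoundedContinuousFunction.dist_coe_le_dist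
    (f := f.toBCF) (g := g.toBCF) k

instance instUltra : IsUltrametricDist C₀(ℕ, K) := by
  constructor
  intro x y z
  rw [dist_le_iff x z (le_max_iff.mpr (Or.inl dist_nonneg))]
  intro k
  calc ‖x k - z k‖ = dist (x k) (z k) := (dist_eq_norm _ _).symm
    _ ≤ max (dist (x k) (y k)) (dist (y k) (z k)) := IsUltrametricDist.dist_triangle_max _ _ _
    _ ≤ max (dist x y) (dist y z) := by
        apply max_le_max
        · rw [dist_eq_norm]; exact apply_dist x y k
        · rw [dist_eq_norm]; exact apply_dist y z k

/-- norm equality under small perturbation, in `K` -/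
lemma norm_eq_of_sub_lt {a b : K} (h : ‖a - b‖ < ‖b‖) : ‖a‖ = ‖b‖ := by
  have h1 : ‖a‖ ≤ ‖b‖ := by
    calc ‖a‖ = ‖b + (a - b)‖ := by congr 1; ring
    _ ≤ max ‖b‖ ‖a - b‖ := IsUltrametricDist.norm_add_le_max _ _
    _ = ‖b‖ := max_eq_left h.le
  refine le_antisymm h1 ?_
  by_contra hc
  push_neg at hc
  have h2 : ‖b‖ ≤ max ‖a‖ ‖a - b‖ := by
    calc ‖b‖ = ‖a + -(a - b)‖ := by congr 1; ring
    _ ≤ max ‖a‖ ‖-(a - b)‖ := IsUltrametricDist.norm_add_le_max _ _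
    _ = max ‖a‖ ‖a - b‖ := by rw [norm_neg]
  exact lt_irrefl _ (h2.trans_lt (max_lt hc h))

/-- the single-coordinate bump -/
noncomputable def single (k : ℕ) (v : K) : C₀(ℕ, K) :=
  ⟨⟨fun j => if j = k then v else 0, continuous_of_discreteTopology⟩, by
    rw [cocompact_eq_atTop (α := ℕ)]
    refine tendsto_const_nhds.congr' ?_
    filter_upwards [Filter.eventually_ge_atTop (k+1)] with j hj
    have : j ≠ k := by omega
    simp [this]⟩

@[simp] lemma single_apply_self (k : ℕ) (v : K) : single k v k = v := by
  show (if k = k then v else 0) = v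
  simp

lemma single_apply_ne {j k : ℕ} (h : j ≠ k) (v : K) : single k v j = 0 := by
  show (if j = k then v else 0) = 0
  simp [h]

lemma norm_single (k : ℕ) (v : K) : ‖single k v‖ = ‖v‖ := by
  refine le_antisymm ?_ ?_
  · rw [← dist_zero_right, dist_le_iff _ _ (norm_nonneg v)]
    intro j
    rcases eq_or_ne j k with rfl | h
    · simp
    · simp [single_apply_ne h]
  · have := apply_dist (single k v) 0 k
    simpa using this

lemma norm_single_sub_single {k k' : ℕ} (h : k ≠ k') (v : K) :
    ‖single k v - single k' v‖ = ‖v‖ := by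
  refine le_antisymm ?_ ?_
  · rw [← dist_zero_right, dist_le_iff _ _ (norm_nonneg v)]
    intro j
    have h0 : (0 : C₀(ℕ, K)) j = 0 := rfl
    have hv : (single k v - single k' v) j = single k v j - single k' v j := rfl
    rw [h0, sub_zero, hv]
    rcases eq_or_ne j k with rfl | h1
    · rw [single_apply_self, single_apply_ne h, sub_zero]
    · rw [single_apply_ne h1]
      rcases eq_or_ne j k' with rfl | h2
      · rw [single_apply_self, zero_sub, norm_neg]
      · rw [single_apply_ne h2, sub_zero, norm_zero]; exact norm_nonneg v
  · have := apply_dist (single k v - single k' v) 0 k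
    have h2 : (single k v - single k' v) k = v := by
      have : (single k v - single k' v) k = single k v k - single k' v k := rfl
      rw [this, single_apply_self, single_apply_ne h, sub_zero]
    simpa [h2] using this

/-- tail bound -/
lemma tail (z : C₀(ℕ, K)) {ρ : ℝ} (hρ : 0 < ρ) : ∃ N, ∀ k, N ≤ k → ‖z k‖ < ρ := by
  have h := ZeroAtInftyContinuousMapClass.zero_at_infty z
  rw [cocompact_eq_atTop (α := ℕ)] at h
  have h2 := Metric.tendsto_nhds.mp h ρ hρ
  rw [Filter.eventually_atTop] at h2
  obtain ⟨N, hN⟩ := h2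
  exact ⟨N, fun k hk => by simpa [dist_eq_norm] using hN k hk⟩


section LC
variable [LocallyCompactSpace K]

/-- a countable ρ-net for c₀ -/
lemma net {ρ : ℝ} (hρ : 0 < ρ) :
    ∃ D : Set C₀(ℕ, K), D.Countable ∧ ∀ x : C₀(ℕ, K), ∃ d ∈ D, dist x d ≤ ρ := by
  haveI : ProperSpace K := ProperSpace.of_nontriviallyNormedField_of_weaklyLocallyCompactSpace K
  obtain ⟨S, hSc, hSd⟩ := TopologicalSpace.exists_countable_dense K
  haveI : Countable ↥S := hSc.to_subtype
  let T : (Σ N : ℕ, (Fin N → ↥S)) → C₀(ℕ, K) := fun p =>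
    ⟨⟨fun j => if h : j < p.1 then (p.2 ⟨j, h⟩ : K) else 0, continuous_of_discreteTopology⟩, by
      rw [cocompact_eq_atTop (α := ℕ)]
      refine tendsto_const_nhds.congr' ?_
      filter_upwards [Filter.eventually_ge_atTop p.1] with j hj
      have h2 : ¬ (j < p.1) := by omega
      simp [h2]⟩
  refine ⟨Set.range T, Set.countable_range T, fun x => ?_⟩
  obtain ⟨N, hN⟩ := tail x hρ
  have hsel : ∀ k : ℕ, ∃ s : ↥S, ‖x k - (s : K)‖ < ρ := by
    intro k
    obtain ⟨y, hy1, hy2⟩ := Metric.dense_iff.mp hSd (x k) ρ hρ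
    exact ⟨⟨y, hy2⟩, by rw [← dist_eq_norm]; exact Metric.mem_ball'.mp hy1⟩
  refine ⟨T ⟨N, fun i => (hsel i).choose⟩, ⟨_, rfl⟩, ?_⟩
  rw [dist_le_iff _ _ hρ.le]
  intro k
  by_cases hk : k < N
  · have : T ⟨N, fun i => (hsel i).choose⟩ k = ((hsel (⟨k, hk⟩ : Fin N)).choose : K) := by
      show (if h : k < N then _ else 0) = _
      rw [dif_pos hk]
    rw [this]
    exact ((hsel (⟨k, hk⟩ : Fin N)).choose_spec).le
  · have : T ⟨N, fun i => (hsel i).choose⟩ k = 0 := by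
      show (if h : k < N then _ else 0) = 0
      rw [dif_neg hk]
    rw [this, sub_zero]
    exact (hN k (by omega)).le

/-- level-ρ balls form a countable family -/
lemma countable_balls {ρ : ℝ} (hρ : 0 < ρ) :
    Set.Countable {B : Set C₀(ℕ, K) | ∃ z, B = closedBall z ρ} := by
  obtain ⟨D, hDc, hDn⟩ := net (K := K) hρ
  refine Set.Countable.mono ?_ (hDc.image (fun d => closedBall d ρ))
  rintro B ⟨z, rfl⟩
  obtain ⟨d, hd, hdist⟩ := hDn z
  refine ⟨d, hd, ?_⟩
  exact IsUltrametricDist.closedBall_eq_of_mem (mem_closedBall.mpr hdist)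

theorem c0_homeo_baire [CompleteSpace K] (π : K) (hπ0 : 0 < ‖π‖) (hπ1 : ‖π‖ < 1) :
    Nonempty (C₀(ℕ, K) ≃ₜ (ℕ → ℕ)) := by
  have hanti : ∀ {m n : ℕ}, m ≤ n → ‖π‖ ^ n ≤ ‖π‖ ^ m :=
    fun h => pow_le_pow_of_le_one hπ0.le hπ1.le h
  have hpos : ∀ n : ℕ, (0:ℝ) < ‖π‖ ^ n := fun n => pow_pos hπ0 n
  have hπne : π ≠ 0 := norm_pos_iff.mp hπ0
  set ν : ℕ → C₀(ℕ, K) → Set C₀(ℕ, K) := fun n x => closedBall x (‖π‖ ^ n) with hν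
  set R : Set (Set C₀(ℕ, K)) := {B | ∃ z, B = closedBall z (‖π‖ ^ (0:ℕ))} with hRdef
  set Ch : ℕ → Set C₀(ℕ, K) → Set C₀(ℕ, K) → Prop := fun n B B' =>
    (∃ z', B' = closedBall z' (‖π‖ ^ (n+1))) ∧
      (∀ z z', B = closedBall z (‖π‖ ^ n) → B' = closedBall z' (‖π‖ ^ (n+1)) →
        dist z' z ≤ ‖π‖ ^ n) with hChdef
  apply homeo_of_scheme R Ch ν
  · exact fun x => ⟨x, rfl⟩
  · -- hCh
    intro n x
    refine ⟨⟨x, rfl⟩, fun z z' hz hz' => ?_⟩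
    have hx1 : dist x z ≤ ‖π‖ ^ n := by
      have hmem : x ∈ ν n x := mem_closedBall_self (hpos n).le
      rw [hz] at hmem
      exact mem_closedBall.mp hmem
    have hx2 : dist x z' ≤ ‖π‖ ^ (n+1) := by
      have hmem : x ∈ ν (n+1) x := mem_closedBall_self (hpos (n+1)).le
      rw [hz'] at hmem
      exact mem_closedBall.mp hmem
    calc dist z' z ≤ max (dist z' x) (dist x z) := IsUltrametricDist.dist_triangle_max _ _ _
      _ ≤ ‖π‖ ^ n := max_le (by rw [dist_comm]; exact hx2.trans (hanti (Nat.le_succ n))) hx1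
  · exact (countable_balls (hpos 0)).to_subtype
  · -- hRi
    refine Infinite.of_injective
      (fun k : ℕ => (⟨closedBall (single k π⁻¹) (‖π‖ ^ (0:ℕ)), ⟨_, rfl⟩⟩ : ↥R)) ?_
    intro k k' h
    by_contra hne
    have hballs : closedBall (single k π⁻¹) (‖π‖ ^ (0:ℕ)) = closedBall (single k' π⁻¹) (‖π‖ ^ (0:ℕ)) :=
      congrArg Subtype.val h
    have hmem : single k π⁻¹ ∈ closedBall (single k' π⁻¹) (‖π‖ ^ (0:ℕ)) := by
      rw [← hballs]; exact mem_closedBall_self (hpos 0).le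
    have hd : dist (single k π⁻¹) (single k' π⁻¹) ≤ 1 := by
      simpa using mem_closedBall.mp hmem
    have : ‖π⁻¹‖ ≤ 1 := by
      rw [← norm_single_sub_single hne π⁻¹, ← dist_eq_norm]; exact hd
    rw [norm_inv] at this
    exact absurd ((one_lt_inv₀ hπ0).mpr hπ1) (not_lt.mpr this)
  · -- hCc
    intro n a
    have h1 : {b | Ch n a b} ⊆ {B : Set C₀(ℕ, K) | ∃ z, B = closedBall z (‖π‖ ^ (n+1))} :=
      fun b hb => hb.1
    exact (Set.Countable.mono h1 (countable_balls (hpos (n+1)))).to_subtype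
  · -- hCi
    intro n a
    have key : ∀ z : C₀(ℕ, K), (∀ w, a = closedBall w (‖π‖ ^ n) → dist z w ≤ ‖π‖ ^ n) →
        Infinite {b // Ch n a b} := by
      intro z hzrep
      refine Infinite.of_injective (fun k : ℕ =>
        (⟨closedBall (z + single k (π ^ n)) (‖π‖ ^ (n+1)), ⟨_, rfl⟩, ?_⟩ : {b // Ch n a b})) ?_
      · intro w w' hw hw'
        have h1 : dist z w ≤ ‖π‖ ^ n := hzrep w hw
        have h2 : dist (z + single k (π ^ n)) w' ≤ ‖π‖ ^ (n+1) := by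
          have := mem_closedBall_self (hpos (n+1)).le (x := z + single k (π ^ n))
          rw [hw'] at this
          exact mem_closedBall.mp this
        have h3 : dist (z + single k (π ^ n)) z = ‖π‖ ^ n := by
          rw [dist_eq_norm, add_sub_cancel_left, norm_single, norm_pow]
        calc dist w' w ≤ max (dist w' (z + single k (π ^ n)))
              (dist (z + single k (π ^ n)) w) := IsUltrametricDist.dist_triangle_max _ _ _
          _ ≤ ‖π‖ ^ n := by
            refine max_le ?_ ?_
            · rw [dist_comm]; exact h2.trans (hanti (Nat.le_succ n))
            · calc dist (z + single k (π ^ n)) w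
                  ≤ max (dist (z + single k (π ^ n)) z) (dist z w) :=
                    IsUltrametricDist.dist_triangle_max _ _ _
                _ ≤ ‖π‖ ^ n := max_le h3.le h1
      · intro k k' h
        by_contra hne
        have hballs : closedBall (z + single k (π ^ n)) (‖π‖ ^ (n+1)) =
            closedBall (z + single k' (π ^ n)) (‖π‖ ^ (n+1)) := congrArg Subtype.val h
        have hmem : z + single k (π ^ n) ∈ closedBall (z + single k' (π ^ n)) (‖π‖ ^ (n+1)) := by
          rw [← hballs]; exact mem_closedBall_self (hpos (n+1)).le
        have hd : dist (z + single k (π ^ n)) (z + single k' (π ^ n)) ≤ ‖π‖ ^ (n+1) :=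
          mem_closedBall.mp hmem
        rw [dist_eq_norm, add_sub_add_left_eq_sub, norm_single_sub_single hne, norm_pow] at hd
        exact absurd hd (not_le.mpr (pow_lt_pow_right_of_lt_one₀ hπ0 hπ1 (Nat.lt_succ_self n)))
    by_cases ha : ∃ w, a = closedBall w (‖π‖ ^ n)
    · obtain ⟨w0, rfl⟩ := ha
      refine key w0 ?_
      intro w hw
      have : w0 ∈ closedBall w (‖π‖ ^ n) := by
        rw [← hw]; exact mem_closedBall_self (hpos n).le
      exact mem_closedBall.mp this
    · exact key 0 (fun w hw => absurd ⟨w, hw⟩ ha)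
  · -- hloc
    intro n x
    refine ⟨‖π‖ ^ n, hpos n, fun y hy => ?_⟩
    exact (IsUltrametricDist.closedBall_eq_of_mem (mem_closedBall.mpr hy.le)).symm
  · -- hdiam
    intro x ε hε
    obtain ⟨n, hn⟩ := exists_pow_lt_of_lt_one hε hπ1
    refine ⟨n, fun y hy => ?_⟩
    have hmem : y ∈ ν n y := mem_closedBall_self (hpos n).le
    rw [hy] at hmem
    exact lt_of_le_of_lt (mem_closedBall.mp hmem) hn
  · -- hreal
    intro a ha0 haCh
    have hz : ∀ n, ∃ z, a n = closedBall z (‖π‖ ^ n) := by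
      intro n
      match n with
      | 0 => exact ha0
      | (m+1) => exact (haCh m).1
    choose z hzz using hz
    have hcoh : ∀ n, dist (z (n+1)) (z n) ≤ ‖π‖ ^ n :=
      fun n => (haCh n).2 (z n) (z (n+1)) (hzz n) (hzz (n+1))
    have CH : ∀ n k, dist (z (n+k)) (z n) ≤ ‖π‖ ^ n := by
      intro n k
      induction k with
      | zero => simp [(hpos n).le]
      | succ m ih =>
        calc dist (z (n+(m+1))) (z n)
            ≤ max (dist (z (n+m+1)) (z (n+m))) (dist (z (n+m)) (z n)) :=
              IsUltrametricDist.dist_triangle_max _ _ _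
          _ ≤ ‖π‖ ^ n := max_le ((hcoh (n+m)).trans (hanti (Nat.le_add_right n m))) ih
    have hmono : ∀ N n m : ℕ, N ≤ n → n ≤ m → dist (z m) (z n) ≤ ‖π‖ ^ N := by
      intro N n m h1 h2
      have := CH n (m - n)
      rw [Nat.add_sub_cancel' h2] at this
      exact this.trans (hanti h1)
    have hcauchy : CauchySeq z := by
      refine cauchySeq_of_le_tendsto_0 (fun N => ‖π‖ ^ N) (fun n m N hn hm => ?_)
        (tendsto_pow_atTop_nhds_zero_of_lt_one hπ0.le hπ1)
      rcases le_total n m with h | h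
      · rw [dist_comm]; exact hmono N n m hn h
      · exact hmono N m n hm h
    obtain ⟨x, hx⟩ := cauchySeq_tendsto_of_complete hcauchy
    have hxz : ∀ n, dist x (z n) ≤ ‖π‖ ^ n := by
      intro n
      have htd : Tendsto (fun m => dist (z m) (z n)) atTop (𝓝 (dist x (z n))) :=
        hx.dist tendsto_const_nhds
      exact le_of_tendsto htd (eventually_atTop.mpr ⟨n, fun m hm => hmono n n m le_rfl hm⟩)
    refine ⟨x, fun n => ?_⟩
    have h1 : x ∈ closedBall (z n) (‖π‖ ^ n) := mem_closedBall.mpr (hxz n)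
    exact ((IsUltrametricDist.closedBall_eq_of_mem h1).symm).trans (hzz n).symm
end LC



/-- the witness predicate: some coordinate at position `≥ i` has norm `> ‖π‖^m` -/
def Wp (π : K) (i m : ℕ) (z : C₀(ℕ, K)) : Prop := ∃ k, i ≤ k ∧ ‖π‖ ^ m < ‖z k‖

lemma mem_comp_iff (x : C₀(ℕ, K)) : x ∈ (evZero K)ᶜ ↔ ∀ n, ∃ k, n ≤ k ∧ x k ≠ 0 := by
  simp only [evZero, Set.mem_compl_iff, Set.mem_iUnion, Set.mem_setOf_eq, not_exists]
  push_neg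
  rfl

lemma wp_inv {π : K} {m : ℕ} {z z' : C₀(ℕ, K)} (h : dist z z' ≤ ‖π‖ ^ m) (i : ℕ) :
    Wp π i m z ↔ Wp π i m z' := by
  have key : ∀ w w' : C₀(ℕ, K), dist w w' ≤ ‖π‖ ^ m → Wp π i m w → Wp π i m w' := by
    rintro w w' hd ⟨k, hk, hnorm⟩
    refine ⟨k, hk, ?_⟩
    have h1 : ‖w' k - w k‖ ≤ dist w' w := apply_dist w' w k
    rw [dist_comm] at h1
    have h2 : ‖w' k - w k‖ < ‖w k‖ := lt_of_le_of_lt (h1.trans hd) hnorm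
    rw [norm_eq_of_sub_lt h2]
    exact hnorm
  exact ⟨key z z' h, key z' z (by rwa [dist_comm])⟩

lemma exists_wp {π : K} (hπ0 : 0 < ‖π‖) (hπ1 : ‖π‖ < 1) {x : C₀(ℕ, K)}
    (hx : x ∈ (evZero K)ᶜ) (i M : ℕ) : ∃ m, M < m ∧ Wp π i m x := by
  obtain ⟨k, hk, hne⟩ := (mem_comp_iff x).mp hx i
  obtain ⟨m0, hm0⟩ := exists_pow_lt_of_lt_one (norm_pos_iff.mpr hne) hπ1
  refine ⟨max m0 (M+1), lt_of_lt_of_le (Nat.lt_succ_self M) (le_max_right _ _), k, hk, ?_⟩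
  exact lt_of_le_of_lt (pow_le_pow_of_le_one hπ0.le hπ1.le (le_max_left _ _)) hm0

variable (π : K) (hπ0 : 0 < ‖π‖) (hπ1 : ‖π‖ < 1)

/-- the strictly increasing sequence of levels attached to an element of the complement -/
noncomputable def mu (x : ↥((evZero K)ᶜ)) : ℕ → ℕ
  | 0 => @Nat.find (fun m => Wp π 0 m ↑x) (Classical.decPred _)
      (let h := exists_wp hπ0 hπ1 x.2 0 0; ⟨h.choose, h.choose_spec.2⟩)
  | (n+1) => @Nat.find (fun m => mu x n < m ∧ Wp π (n+1) m ↑x) (Classical.decPred _)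
      (exists_wp hπ0 hπ1 x.2 (n+1) (mu x n))

lemma mu_zero_eq_iff (x : ↥((evZero K)ᶜ)) (M : ℕ) :
    mu π hπ0 hπ1 x 0 = M ↔ Wp π 0 M ↑x ∧ ∀ m < M, ¬ Wp π 0 m ↑x := by
  letI : DecidablePred (fun m => Wp π 0 m (↑x : C₀(ℕ, K))) := Classical.decPred _
  show Nat.find _ = M ↔ _
  exact Nat.find_eq_iff _

lemma mu_succ_eq_iff (x : ↥((evZero K)ᶜ)) (n M : ℕ) :
    mu π hπ0 hπ1 x (n+1) = M ↔ (mu π hπ0 hπ1 x n < M ∧ Wp π (n+1) M ↑x) ∧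
      ∀ m < M, ¬(mu π hπ0 hπ1 x n < m ∧ Wp π (n+1) m ↑x) := by
  letI : DecidablePred (fun m => mu π hπ0 hπ1 x n < m ∧ Wp π (n+1) m (↑x : C₀(ℕ, K))) :=
    Classical.decPred _
  show Nat.find _ = M ↔ _
  exact Nat.find_eq_iff _

lemma mu_zero_spec (x : ↥((evZero K)ᶜ)) :
    Wp π 0 (mu π hπ0 hπ1 x 0) ↑x ∧ ∀ m < mu π hπ0 hπ1 x 0, ¬ Wp π 0 m ↑x :=
  (mu_zero_eq_iff π hπ0 hπ1 x _).mp rfl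

lemma mu_succ_spec (x : ↥((evZero K)ᶜ)) (n : ℕ) :
    (mu π hπ0 hπ1 x n < mu π hπ0 hπ1 x (n+1) ∧ Wp π (n+1) (mu π hπ0 hπ1 x (n+1)) ↑x) ∧
      ∀ m < mu π hπ0 hπ1 x (n+1), ¬(mu π hπ0 hπ1 x n < m ∧ Wp π (n+1) m ↑x) :=
  (mu_succ_eq_iff π hπ0 hπ1 x n _).mp rfl

lemma mu_lt (x : ↥((evZero K)ᶜ)) (n : ℕ) : mu π hπ0 hπ1 x n < mu π hπ0 hπ1 x (n+1) :=
  (mu_succ_spec π hπ0 hπ1 x n).1.1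

lemma mu_ge (x : ↥((evZero K)ᶜ)) (n : ℕ) : n ≤ mu π hπ0 hπ1 x n := by
  induction n with
  | zero => exact Nat.zero_le _
  | succ m ih => exact Nat.succ_le_of_lt (lt_of_le_of_lt ih (mu_lt π hπ0 hπ1 x m))

lemma mu_loc (x y : ↥((evZero K)ᶜ)) (n : ℕ)
    (h : dist (↑y : C₀(ℕ, K)) ↑x ≤ ‖π‖ ^ (mu π hπ0 hπ1 x n)) :
    ∀ i ≤ n, mu π hπ0 hπ1 y i = mu π hπ0 hπ1 x i := by
  have hanti : ∀ {m n : ℕ}, m ≤ n → ‖π‖ ^ n ≤ ‖π‖ ^ m :=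
    fun hmn => pow_le_pow_of_le_one hπ0.le hπ1.le hmn
  induction n with
  | zero =>
    intro i hi
    interval_cases i
    rw [mu_zero_eq_iff]
    obtain ⟨hw, hmin⟩ := mu_zero_spec π hπ0 hπ1 x
    constructor
    · exact (wp_inv (by rw [dist_comm]; exact h) 0).mp hw
    · intro m hm hwy
      refine hmin m hm ?_
      refine (wp_inv (z := (↑x : C₀(ℕ, K))) (z' := (↑y : C₀(ℕ, K))) ?_ 0).mpr hwy
      rw [dist_comm]
      exact h.trans (hanti (le_of_lt (lt_of_lt_of_le hm (le_refl _))))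
  | succ n ih =>
    intro i hi
    have h' : dist (↑y : C₀(ℕ, K)) ↑x ≤ ‖π‖ ^ (mu π hπ0 hπ1 x n) :=
      h.trans (hanti (mu_lt π hπ0 hπ1 x n).le)
    have hy : ∀ j ≤ n, mu π hπ0 hπ1 y j = mu π hπ0 hπ1 x j := ih h'
    rcases Nat.lt_or_ge i (n+1) with hlt | hge
    · exact hy i (Nat.lt_succ_iff.mp hlt)
    · have hieq : i = n + 1 := le_antisymm hi hge
      subst hieq
      rw [mu_succ_eq_iff]
      obtain ⟨⟨hlt', hw⟩, hmin⟩ := mu_succ_spec π hπ0 hπ1 x n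
      refine ⟨⟨?_, ?_⟩, ?_⟩
      · rw [hy n le_rfl]; exact hlt'
      · exact (wp_inv (by rw [dist_comm]; exact h) (n+1)).mp hw
      · intro m hm ⟨hgt, hwy⟩
        refine hmin m hm ⟨by rw [← hy n le_rfl]; exact hgt, ?_⟩
        refine (wp_inv (z := (↑x : C₀(ℕ, K))) (z' := (↑y : C₀(ℕ, K))) ?_ (n+1)).mpr hwy
        rw [dist_comm]
        exact h.trans (hanti hm.le)

theorem comp_homeo_baire [CompleteSpace K] [LocallyCompactSpace K]
    (π : K) (hπ0 : 0 < ‖π‖) (hπ1 : ‖π‖ < 1) :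
    Nonempty (↥((evZero K)ᶜ) ≃ₜ (ℕ → ℕ)) := by
  have hanti : ∀ {m n : ℕ}, m ≤ n → ‖π‖ ^ n ≤ ‖π‖ ^ m :=
    fun h => pow_le_pow_of_le_one hπ0.le hπ1.le h
  have hpos : ∀ n : ℕ, (0:ℝ) < ‖π‖ ^ n := fun n => pow_pos hπ0 n
  have hstrict : ∀ {m n : ℕ}, m < n → ‖π‖ ^ n < ‖π‖ ^ m :=
    fun h => pow_lt_pow_right_of_lt_one₀ hπ0 hπ1 h
  set X := ↥((evZero K)ᶜ)
  set ν : ℕ → X → ℕ × Set C₀(ℕ, K) := fun n x =>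
    (mu π hπ0 hπ1 x n, closedBall (↑x : C₀(ℕ, K)) (‖π‖ ^ (mu π hπ0 hπ1 x n))) with hν
  set R : Set (ℕ × Set C₀(ℕ, K)) := {a | ∃ z : C₀(ℕ, K),
    a.2 = closedBall z (‖π‖ ^ a.1) ∧ Wp π 0 a.1 z ∧ ∀ m < a.1, ¬ Wp π 0 m z} with hRdef
  set Ch : ℕ → ℕ × Set C₀(ℕ, K) → ℕ × Set C₀(ℕ, K) → Prop := fun n a b =>
    a.1 < b.1 ∧ (∃ z : C₀(ℕ, K), b.2 = closedBall z (‖π‖ ^ b.1) ∧ Wp π (n+1) b.1 z ∧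
      ∀ m, a.1 < m → m < b.1 → ¬ Wp π (n+1) m z) ∧
    (∀ z z' : C₀(ℕ, K), a.2 = closedBall z (‖π‖ ^ a.1) → b.2 = closedBall z' (‖π‖ ^ b.1) →
      dist z' z ≤ ‖π‖ ^ a.1) with hChdef
  have hV : Set.Countable (⋃ (m : ℕ),
      (Prod.mk m) '' {B : Set C₀(ℕ, K) | ∃ z, B = closedBall z (‖π‖ ^ m)}) :=
    Set.countable_iUnion fun m => Set.Countable.image (countable_balls (hpos m)) _
  apply homeo_of_scheme R Ch ν
  · -- hR
    intro x
    obtain ⟨hw, hmin⟩ := mu_zero_spec π hπ0 hπ1 x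
    exact ⟨↑x, rfl, hw, hmin⟩
  · -- hCh
    intro n x
    obtain ⟨⟨hlt, hw⟩, hmin⟩ := mu_succ_spec π hπ0 hπ1 x n
    refine ⟨hlt, ⟨↑x, rfl, hw, fun m h1 h2 hwm => hmin m h2 ⟨h1, hwm⟩⟩, ?_⟩
    intro z z' h1 h2
    have hm1 : (↑x : C₀(ℕ, K)) ∈ closedBall z (‖π‖ ^ (mu π hπ0 hπ1 x n)) := by
      rw [← h1]; exact mem_closedBall_self (hpos _).le
    have hm2 : (↑x : C₀(ℕ, K)) ∈ closedBall z' (‖π‖ ^ (mu π hπ0 hπ1 x (n+1))) := by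
      rw [← h2]; exact mem_closedBall_self (hpos _).le
    calc dist z' z ≤ max (dist z' ↑x) (dist (↑x : C₀(ℕ, K)) z) :=
          IsUltrametricDist.dist_triangle_max _ _ _
      _ ≤ ‖π‖ ^ (mu π hπ0 hπ1 x n) := by
          refine max_le ?_ (mem_closedBall.mp hm1)
          rw [dist_comm]
          exact (mem_closedBall.mp hm2).trans (hanti hlt.le)
  · -- hRc
    refine (Set.Countable.mono ?_ hV).to_subtype
    rintro ⟨m, B⟩ ⟨z, hz, _⟩
    exact Set.mem_iUnion.mpr ⟨m, ⟨B, ⟨z, hz⟩, rfl⟩⟩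
  · -- hRi
    refine Infinite.of_injective (fun k : ℕ =>
      (⟨(0, closedBall (single k π⁻¹) (‖π‖ ^ (0:ℕ))), single k π⁻¹, rfl,
        ⟨k, Nat.zero_le k, by
          rw [pow_zero, single_apply_self, norm_inv]
          exact (one_lt_inv₀ hπ0).mpr hπ1⟩,
        fun m hm => absurd hm (Nat.not_lt_zero m)⟩ : ↥R)) ?_
    intro k k' h
    by_contra hne
    have hballs : closedBall (single k π⁻¹) (‖π‖ ^ (0:ℕ))
        = closedBall (single k' π⁻¹) (‖π‖ ^ (0:ℕ)) :=
      congrArg (fun t : ↥R => (t : ℕ × Set C₀(ℕ, K)).2) h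
    have hmem : single k π⁻¹ ∈ closedBall (single k' π⁻¹) (‖π‖ ^ (0:ℕ)) := by
      rw [← hballs]; exact mem_closedBall_self (hpos 0).le
    have hd : dist (single k π⁻¹) (single k' π⁻¹) ≤ 1 := by
      simpa using mem_closedBall.mp hmem
    have hle : ‖π⁻¹‖ ≤ 1 := by
      rw [← norm_single_sub_single hne π⁻¹, ← dist_eq_norm]; exact hd
    rw [norm_inv] at hle
    exact absurd ((one_lt_inv₀ hπ0).mpr hπ1) (not_lt.mpr hle)
  · -- hCc
    intro n a
    refine (Set.Countable.mono ?_ hV).to_subtype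
    rintro ⟨m, B⟩ ⟨_, ⟨z, hz, _, _⟩, _⟩
    exact Set.mem_iUnion.mpr ⟨m, ⟨B, ⟨z, hz⟩, rfl⟩⟩
  · -- hCi
    intro n a
    have key : ∀ z : C₀(ℕ, K),
        (∀ w, a.2 = closedBall w (‖π‖ ^ a.1) → dist z w ≤ ‖π‖ ^ a.1) →
        Infinite {b // Ch n a b} := by
      intro z hzrep
      obtain ⟨N, hN⟩ := tail z (hpos (a.1 + 1))
      have hwj : ∀ j : ℕ, ‖(z + single (N + n + 1 + j) (π ^ a.1)) (N + n + 1 + j)‖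
          = ‖π‖ ^ a.1 := by
        intro j
        have happ : (z + single (N + n + 1 + j) (π ^ a.1)) (N + n + 1 + j)
            = z (N + n + 1 + j) + π ^ a.1 := by
          have := single_apply_self (N + n + 1 + j) (π ^ a.1)
          show z (N + n + 1 + j) + single (N + n + 1 + j) (π ^ a.1) (N + n + 1 + j) = _
          rw [this]
        rw [happ, ← norm_pow π a.1]
        refine norm_eq_of_sub_lt ?_
        rw [add_sub_cancel_right, norm_pow]
        exact (hN _ (by omega)).trans (hstrict (Nat.lt_succ_self a.1))
      refine Infinite.of_injective (fun j : ℕ =>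
        (⟨(a.1 + 1, closedBall (z + single (N + n + 1 + j) (π ^ a.1)) (‖π‖ ^ (a.1 + 1))),
          Nat.lt_succ_self a.1,
          ⟨z + single (N + n + 1 + j) (π ^ a.1), rfl,
            ⟨N + n + 1 + j, by omega, by rw [hwj j]; exact hstrict (Nat.lt_succ_self a.1)⟩,
            fun m h1 h2 => absurd (by omega : a.1 + 1 ≤ m ∧ m < a.1 + 1 → False)
              (by simp [h2, Nat.succ_le_of_lt h1])⟩, ?_⟩ : {b // Ch n a b})) ?_
      · intro w w' h1 h2
        have hd1 : dist z w ≤ ‖π‖ ^ a.1 := hzrep w h1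
        have hd2 : dist (z + single (N + n + 1 + j) (π ^ a.1)) w' ≤ ‖π‖ ^ (a.1 + 1) := by
          have h2' : closedBall (z + single (N + n + 1 + j) (π ^ a.1)) (‖π‖ ^ (a.1 + 1))
              = closedBall w' (‖π‖ ^ (a.1 + 1)) := h2
          have hself := mem_closedBall_self (hpos (a.1 + 1)).le
            (x := z + single (N + n + 1 + j) (π ^ a.1))
          rw [h2'] at hself
          exact mem_closedBall.mp hself
        have hd3 : dist (z + single (N + n + 1 + j) (π ^ a.1)) z = ‖π‖ ^ a.1 := by
          rw [dist_eq_norm, add_sub_cancel_left, norm_single, norm_pow]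
        calc dist w' w ≤ max (dist w' (z + single (N + n + 1 + j) (π ^ a.1)))
              (dist (z + single (N + n + 1 + j) (π ^ a.1)) w) :=
            IsUltrametricDist.dist_triangle_max _ _ _
          _ ≤ ‖π‖ ^ a.1 := by
            refine max_le ?_ ?_
            · rw [dist_comm]; exact hd2.trans (hanti (Nat.le_succ _))
            · calc dist (z + single (N + n + 1 + j) (π ^ a.1)) w
                  ≤ max (dist (z + single (N + n + 1 + j) (π ^ a.1)) z) (dist z w) :=
                    IsUltrametricDist.dist_triangle_max _ _ _
                _ ≤ ‖π‖ ^ a.1 := max_le hd3.le hd1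
      · intro j j' h
        by_contra hne
        have hKne : N + n + 1 + j ≠ N + n + 1 + j' := by omega
        have hballs : closedBall (z + single (N + n + 1 + j) (π ^ a.1)) (‖π‖ ^ (a.1 + 1))
            = closedBall (z + single (N + n + 1 + j') (π ^ a.1)) (‖π‖ ^ (a.1 + 1)) := by
          have := congrArg (fun t : {b // Ch n a b} => (t : ℕ × Set C₀(ℕ, K)).2) h
          exact this
        have hmem : z + single (N + n + 1 + j) (π ^ a.1)
            ∈ closedBall (z + single (N + n + 1 + j') (π ^ a.1)) (‖π‖ ^ (a.1 + 1)) := by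
          rw [← hballs]; exact mem_closedBall_self (hpos _).le
        have hd := mem_closedBall.mp hmem
        rw [dist_eq_norm, add_sub_add_left_eq_sub, norm_single_sub_single hKne, norm_pow] at hd
        exact absurd hd (not_le.mpr (hstrict (Nat.lt_succ_self a.1)))
    by_cases ha : ∃ w, a.2 = closedBall w (‖π‖ ^ a.1)
    · obtain ⟨w0, hw0⟩ := ha
      refine key w0 ?_
      intro w hw
      have : w0 ∈ closedBall w (‖π‖ ^ a.1) := by
        rw [← hw, hw0]; exact mem_closedBall_self (hpos _).le
      exact mem_closedBall.mp this
    · exact key 0 (fun w hw => absurd ⟨w, hw⟩ ha)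
  · -- hloc
    intro n x
    refine ⟨‖π‖ ^ (mu π hπ0 hπ1 x n), hpos _, fun y hy => ?_⟩
    have hd : dist (↑y : C₀(ℕ, K)) ↑x ≤ ‖π‖ ^ (mu π hπ0 hπ1 x n) := by
      rw [← Subtype.dist_eq]; exact hy.le
    have h1 : mu π hπ0 hπ1 y n = mu π hπ0 hπ1 x n := mu_loc π hπ0 hπ1 x y n hd n le_rfl
    have hmem : (↑y : C₀(ℕ, K)) ∈ closedBall (↑x : C₀(ℕ, K)) (‖π‖ ^ (mu π hπ0 hπ1 x n)) :=
      mem_closedBall.mpr hd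
    show (mu π hπ0 hπ1 y n, closedBall (↑y : C₀(ℕ, K)) (‖π‖ ^ (mu π hπ0 hπ1 y n)))
      = (mu π hπ0 hπ1 x n, closedBall (↑x : C₀(ℕ, K)) (‖π‖ ^ (mu π hπ0 hπ1 x n)))
    rw [h1, (IsUltrametricDist.closedBall_eq_of_mem hmem)]
  · -- hdiam
    intro x ε hε
    obtain ⟨n, hn⟩ := exists_pow_lt_of_lt_one hε hπ1
    refine ⟨n, fun y hy => ?_⟩
    have h1 : mu π hπ0 hπ1 y n = mu π hπ0 hπ1 x n := congrArg Prod.fst hy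
    have h2 : closedBall (↑y : C₀(ℕ, K)) (‖π‖ ^ (mu π hπ0 hπ1 y n))
        = closedBall (↑x : C₀(ℕ, K)) (‖π‖ ^ (mu π hπ0 hπ1 x n)) := congrArg Prod.snd hy
    have hmem : (↑y : C₀(ℕ, K)) ∈ closedBall (↑x : C₀(ℕ, K)) (‖π‖ ^ (mu π hπ0 hπ1 x n)) := by
      rw [← h2]; exact mem_closedBall_self (hpos _).le
    rw [Subtype.dist_eq]
    exact lt_of_le_of_lt ((mem_closedBall.mp hmem).trans (hanti (mu_ge π hπ0 hπ1 x n))) hn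
  · -- hreal
    intro a ha0 haCh
    obtain ⟨z0, hz0rep, hz0w, hz0min⟩ := ha0
    choose zc hc1 hc2 hc3 using fun n => (haCh n).2.1
    set z : ℕ → C₀(ℕ, K) := fun n => Nat.casesOn n z0 zc with hzdef
    have hrep : ∀ n, (a n).2 = closedBall (z n) (‖π‖ ^ (a n).1) := by
      intro n; cases n with
      | zero => exact hz0rep
      | succ m => exact hc1 m
    have hwit : ∀ n, Wp π n (a n).1 (z n) := by
      intro n; cases n with
      | zero => exact hz0w
      | succ m => exact hc2 m
    have hMlt : ∀ n, (a n).1 < (a (n+1)).1 := fun n => (haCh n).1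
    have hMmono : ∀ {n m : ℕ}, n ≤ m → (a n).1 ≤ (a m).1 := by
      intro n m h
      induction m with
      | zero =>
        have h0 : n = 0 := Nat.le_zero.mp h
        rw [h0]
      | succ k ih =>
        rcases Nat.lt_or_ge n (k+1) with h1 | h2
        · exact (ih (Nat.lt_succ_iff.mp h1)).trans (hMlt k).le
        · have : n = k + 1 := le_antisymm h h2
          rw [this]
      
    have hMge : ∀ n, n ≤ (a n).1 := by
      intro n
      induction n with
      | zero => exact Nat.zero_le _
      | succ k ih => exact Nat.succ_le_of_lt (lt_of_le_of_lt ih (hMlt k))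
    have hcoh : ∀ n, dist (z (n+1)) (z n) ≤ ‖π‖ ^ (a n).1 :=
      fun n => (haCh n).2.2 (z n) (z (n+1)) (hrep n) (hrep (n+1))
    have CH : ∀ n k, dist (z (n+k)) (z n) ≤ ‖π‖ ^ (a n).1 := by
      intro n k
      induction k with
      | zero => simp [(hpos _).le]
      | succ m ih =>
        calc dist (z (n+(m+1))) (z n)
            ≤ max (dist (z (n+m+1)) (z (n+m))) (dist (z (n+m)) (z n)) :=
              IsUltrametricDist.dist_triangle_max _ _ _
          _ ≤ ‖π‖ ^ (a n).1 :=
              max_le ((hcoh (n+m)).trans (hanti (hMmono (Nat.le_add_right n m)))) ih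
    have hmono : ∀ N n m : ℕ, N ≤ n → n ≤ m → dist (z m) (z n) ≤ ‖π‖ ^ N := by
      intro N n m h1 h2
      have h3 := CH n (m - n)
      rw [Nat.add_sub_cancel' h2] at h3
      exact h3.trans (hanti (h1.trans (hMge n)))
    have hcauchy : CauchySeq z := by
      refine cauchySeq_of_le_tendsto_0 (fun N => ‖π‖ ^ N) (fun n m N hn hm => ?_)
        (tendsto_pow_atTop_nhds_zero_of_lt_one hπ0.le hπ1)
      rcases le_total n m with h | h
      · rw [dist_comm]; exact hmono N n m hn h
      · exact hmono N m n hm h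
    obtain ⟨x, hx⟩ := cauchySeq_tendsto_of_complete hcauchy
    have hxz : ∀ n, dist x (z n) ≤ ‖π‖ ^ (a n).1 := by
      intro n
      have htd : Tendsto (fun m => dist (z m) (z n)) atTop (𝓝 (dist x (z n))) :=
        hx.dist tendsto_const_nhds
      refine le_of_tendsto htd (eventually_atTop.mpr ⟨n, fun m hm => ?_⟩)
      have h3 := CH n (m - n)
      rw [Nat.add_sub_cancel' hm] at h3
      exact h3
    have hwx : ∀ n, Wp π n (a n).1 x := by
      intro n
      refine (wp_inv (z := z n) (z' := x) ?_ n).mp (hwit n)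
      rw [dist_comm]; exact hxz n
    have hxc : x ∈ (evZero K)ᶜ := by
      rw [mem_comp_iff]
      intro i
      obtain ⟨k, hk, hnorm⟩ := hwx i
      exact ⟨k, hk, norm_pos_iff.mp ((hpos _).trans hnorm)⟩
    set Y : X := ⟨x, hxc⟩ with hY
    have hYcoe : (↑Y : C₀(ℕ, K)) = x := rfl
    have hmu : ∀ n, mu π hπ0 hπ1 Y n = (a n).1 := by
      intro n
      induction n with
      | zero =>
        rw [mu_zero_eq_iff]
        refine ⟨hwx 0, ?_⟩
        intro m hm hwxm
        refine hz0min m hm ?_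
        refine (wp_inv (z := x) (z' := z 0) ?_ 0).mp hwxm
        exact (hxz 0).trans (hanti hm.le)
      | succ k ih =>
        rw [mu_succ_eq_iff]
        refine ⟨⟨by rw [ih]; exact hMlt k, hwx (k+1)⟩, ?_⟩
        intro m hm ⟨hgt, hwxm⟩
        rw [ih] at hgt
        refine hc3 k m hgt hm ?_
        refine (wp_inv (z := x) (z' := z (k+1)) ?_ (k+1)).mp hwxm
        exact (hxz (k+1)).trans (hanti hm.le)
    refine ⟨Y, fun n => ?_⟩
    have h2 : closedBall x (‖π‖ ^ (a n).1) = (a n).2 := by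
      have hmem : x ∈ closedBall (z n) (‖π‖ ^ (a n).1) := mem_closedBall.mpr (hxz n)
      rw [hrep n]
      exact (IsUltrametricDist.closedBall_eq_of_mem hmem).symm
    show (mu π hπ0 hπ1 Y n, closedBall (↑Y : C₀(ℕ, K)) (‖π‖ ^ (mu π hπ0 hπ1 Y n))) = a n
    rw [hYcoe, hmu n, h2]



end C0Aux

/-- Let `K` be a locally compact field with a complete
non-Archimedean multiplicative norm whose value group is nontrivial.  The space
`c₀ \\ ⋃_{j=1}^∞ Eʲ`, with the subspace topology, is homeomorphic to `c₀ = c₀(ℕ, K)`. -/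

theorem c0_sdiff_evZero_homeomorph (K : Type*) [NontriviallyNormedField K]
    [IsUltrametricDist K] [CompleteSpace K] [LocallyCompactSpace K] :
    Nonempty (↥((evZero K)ᶜ) ≃ₜ C₀(ℕ, K)) := by
  obtain ⟨c, hc⟩ := NormedField.exists_one_lt_norm K
  have hcpos : (0:ℝ) < ‖c‖ := lt_trans one_pos hc
  have hπ0 : 0 < ‖c⁻¹‖ := by rw [norm_inv]; exact inv_pos.mpr hcpos
  have hπ1 : ‖c⁻¹‖ < 1 := by rw [norm_inv]; exact (inv_lt_one₀ hcpos).mpr hc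
  obtain ⟨e1⟩ := C0Aux.comp_homeo_baire (c⁻¹) hπ0 hπ1
  obtain ⟨e2⟩ := C0Aux.c0_homeo_baire (c⁻¹) hπ0 hπ1
  exact ⟨e1.trans e2.symm⟩
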